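/- In the unlearning setup, the retain-set part of the one-step second moment satisfies, with expectation over the Bernoulli batch selection, E[ (I − η(1−α)(1/B) Σ_r x_{r,k} H_r^R)ᵀ (I − η(1−α)(1/B) Σ_r x_{r,k} H_r^R) ] = (I − η(1−α) H_R)² + η²(1−α)² (1/n_r)(1/B − 1/n_r) Σ_{r=1}^{n_r} (H_r^R)². -/

import Mathlib

open Matrix Filter Finset Set
open scoped BigOperators

noncomputable section

/-- Frobenius norm of a real square matrix. -/
def frob {n : Type*} [Fintype n] (M : Matrix n n ℝ) : ℝ :=
  Real.sqrt (∑ i, ∑ j, (M i j) ^ 2)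

open Classical in
/-- The positive semidefinite square root of a matrix (junk value `0` on non-PSD input). -/
def psdSqrt {n : Type*} [Fintype n] [DecidableEq n] (A : Matrix n n ℝ) : Matrix n n ℝ :=
  if h : A.PosSemidef then
    (h.1.eigenvectorUnitary : Matrix n n ℝ) *
      diagonal ((↑) ∘ (Real.sqrt ·) ∘ h.1.eigenvalues) *
        (star h.1.eigenvectorUnitary : Matrix n n ℝ)
  else 0

open Classical in
/-- The largest eigenvalue of a symmetric real matrix (junk value `0` otherwise). -/
def lamMax {n : Type*} [Fintype n] [DecidableEq n] (A : Matrix n n ℝ) : ℝ :=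
  if h : A.IsHermitian then ⨆ i, h.eigenvalues i else 0

/-- Probability of observing the Bernoulli(B/n) selection pattern `x`. -/
def selProb (n B : ℕ) (x : Fin n → Bool) : ℝ :=
  ∏ i, if x i then (B : ℝ) / n else 1 - (B : ℝ) / n

/-- Average Hessian of a family. -/
def Hbar {d n : ℕ} (H : Fin n → Matrix (Fin d) (Fin d) ℝ) : Matrix (Fin d) (Fin d) ℝ :=
  (n : ℝ)⁻¹ • ∑ i, H i

/-- Mean update operator `J = I − η(1−α)H_R + ηα H_F`. -/
def Jbar {d nr nf : ℕ} (η α : ℝ) (HR : Fin nr → Matrix (Fin d) (Fin d) ℝ)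
    (HF : Fin nf → Matrix (Fin d) (Fin d) ℝ) : Matrix (Fin d) (Fin d) ℝ :=
  1 - (η * (1 - α)) • Hbar HR + (η * α) • Hbar HF

/-- Random update operator for the batch-selection pattern `x`. -/
def Jop {d nr nf : ℕ} (η α : ℝ) (B : ℕ) (HR : Fin nr → Matrix (Fin d) (Fin d) ℝ)
    (HF : Fin nf → Matrix (Fin d) (Fin d) ℝ)
    (x : (Fin nr → Bool) × (Fin nf → Bool)) : Matrix (Fin d) (Fin d) ℝ :=
  1 - (η * (1 - α) / B) • (∑ r, if x.1 r then HR r else 0)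
    + (η * α / B) • (∑ f, if x.2 f then HF f else 0)

/-- `C_r = η²(1−α)²(1/n_r)(1/B − 1/n_r)`. -/
def Crc (η α : ℝ) (B nr : ℕ) : ℝ :=
  η ^ 2 * (1 - α) ^ 2 * (nr : ℝ)⁻¹ * ((B : ℝ)⁻¹ - (nr : ℝ)⁻¹)

/-- `C_f = η²α²(1/n_f)(1/B − 1/n_f)`. -/
def Cfc (η α : ℝ) (B nf : ℕ) : ℝ :=
  η ^ 2 * α ^ 2 * (nf : ℝ)⁻¹ * ((B : ℝ)⁻¹ - (nf : ℝ)⁻¹)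

/-- Noise-accumulation matrices `N_k`. -/
def Nmat {d nr nf : ℕ} (η α : ℝ) (B : ℕ) (HR : Fin nr → Matrix (Fin d) (Fin d) ℝ)
    (HF : Fin nf → Matrix (Fin d) (Fin d) ℝ) : ℕ → Matrix (Fin d) (Fin d) ℝ
  | 0 => 1
  | k + 1 =>
      Cfc η α B nf • ∑ f, HF f * Nmat η α B HR HF k * HF f
        + Crc η α B nr • ∑ r, HR r * Nmat η α B HR HF k * HR r

/-- `W_k = J_{k−1} ⋯ J_1 J_0` for a finite sequence of batch selections. -/
def Wk {d nr nf : ℕ} (η α : ℝ) (B : ℕ) (HR : Fin nr → Matrix (Fin d) (Fin d) ℝ)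
    (HF : Fin nf → Matrix (Fin d) (Fin d) ℝ) {k : ℕ}
    (s : Fin k → (Fin nr → Bool) × (Fin nf → Bool)) : Matrix (Fin d) (Fin d) ℝ :=
  (List.ofFn fun i => Jop η α B HR HF (s i)).reverse.prod

/-- `E‖w_k‖² = E Tr(W_k W_kᵀ)`, the expectation taken over the i.i.d. Bernoulli
batch selections of the `k` steps. -/
def Ewk2 {d nr nf : ℕ} (η α : ℝ) (B : ℕ) (HR : Fin nr → Matrix (Fin d) (Fin d) ℝ)
    (HF : Fin nf → Matrix (Fin d) (Fin d) ℝ) (k : ℕ) : ℝ :=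
  ∑ s : Fin k → (Fin nr → Bool) × (Fin nf → Bool),
    (∏ i, selProb nr B (s i).1 * selProb nf B (s i).2) *
      (Wk η α B HR HF s * (Wk η α B HR HF s)ᵀ).trace

/-- `E[(e₁ᵀ w_k)²]`, i.e. the `(i0,i0)` entry of `E[W_k W_kᵀ]`. -/
def Ee1 {d nr nf : ℕ} (η α : ℝ) (B : ℕ) (HR : Fin nr → Matrix (Fin d) (Fin d) ℝ)
    (HF : Fin nf → Matrix (Fin d) (Fin d) ℝ) (i0 : Fin d) (k : ℕ) : ℝ :=
  ∑ s : Fin k → (Fin nr → Bool) × (Fin nf → Bool),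
    (∏ i, selProb nr B (s i).1 * selProb nf B (s i).2) *
      ((Wk η α B HR HF s * (Wk η α B HR HF s)ᵀ) i0 i0)

/-- Mixed Hessian `D_{rf} = C'_r H_r^R + C'_f H_f^F` for a retain/forget pair. -/
def Drf {d nr nf : ℕ} (Cr' Cf' : ℝ) (HR : Fin nr → Matrix (Fin d) (Fin d) ℝ)
    (HF : Fin nf → Matrix (Fin d) (Fin d) ℝ) (p : Fin nr × Fin nf) :
    Matrix (Fin d) (Fin d) ℝ :=
  Cr' • HR p.1 + Cf' • HF p.2

/-- Mix-Hessian `D = (1/(n_r n_f)) Σ_{r,f} D_{rf}`. -/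
def Dmix {d nr nf : ℕ} (Cr' Cf' : ℝ) (HR : Fin nr → Matrix (Fin d) (Fin d) ℝ)
    (HF : Fin nf → Matrix (Fin d) (Fin d) ℝ) : Matrix (Fin d) (Fin d) ℝ :=
  ((nr : ℝ) * nf)⁻¹ • ∑ p : Fin nr × Fin nf, Drf Cr' Cf' HR HF p

/-- Mix-coherence matrix `S_{(r,f),(r',f')} = ‖D_{rf}^{1/2} D_{r'f'}^{1/2}‖_F`. -/
def Smat {d nr nf : ℕ} (Cr' Cf' : ℝ) (HR : Fin nr → Matrix (Fin d) (Fin d) ℝ)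
    (HF : Fin nf → Matrix (Fin d) (Fin d) ℝ) :
    Matrix (Fin nr × Fin nf) (Fin nr × Fin nf) ℝ :=
  Matrix.of fun p q =>
    frob (psdSqrt (Drf Cr' Cf' HR HF p) * psdSqrt (Drf Cr' Cf' HR HF q))

/-- Unlearning coherence `σ = λ_max(S) / max_{(r,f)} λ_max(D_{rf})`. -/
def cohSigma {d nr nf : ℕ} (Cr' Cf' : ℝ) (HR : Fin nr → Matrix (Fin d) (Fin d) ℝ)
    (HF : Fin nf → Matrix (Fin d) (Fin d) ℝ) : ℝ :=
  lamMax (Smat Cr' Cf' HR HF) / ⨆ p : Fin nr × Fin nf, lamMax (Drf Cr' Cf' HR HF p)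

/-- Stacked filter-weight vector of the two-layer ReLU CNN signal-plus-noise model. -/
def wvec (d mfil : ℕ) (μ ξi : Fin d → ℝ) (yi : ℝ)
    (ai bi : Bool → Fin mfil → Bool) : (Bool × Fin mfil) × Fin d → ℝ :=
  fun p =>
    ((if p.1.1 then (1 : ℝ) else -1) / mfil) *
      ((if ai p.1.1 p.1.2 then (1 : ℝ) else 0) * μ p.2 +
        (if bi p.1.1 p.1.2 then (1 : ℝ) else 0) * yi * ξi p.2)

/-- Per-sample Hessian `H_i = ℓ''_i w_i w_iᵀ` of the signal-plus-noise model. -/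
def hessCNN (d mfil : ℕ) (μ ξi : Fin d → ℝ) (yi ℓi : ℝ)
    (ai bi : Bool → Fin mfil → Bool) :
    Matrix ((Bool × Fin mfil) × Fin d) ((Bool × Fin mfil) × Fin d) ℝ :=
  ℓi • vecMulVec (wvec d mfil μ ξi yi ai bi) (wvec d mfil μ ξi yi ai bi)

/-- Mixed Hessian `D_{rf} = C'_r H_r + C'_f H_{n_r+f}` in the CNN model, with the
retain set given by the first `n_r` samples and the forget set by the last `n_f`. -/
def DrfCNN (d mfil nr nf : ℕ) (μ : Fin d → ℝ) (ξ : Fin (nr + nf) → Fin d → ℝ)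
    (y ℓ : Fin (nr + nf) → ℝ) (a b : Fin (nr + nf) → Bool → Fin mfil → Bool)
    (Cr' Cf' : ℝ) (p : Fin nr × Fin nf) :
    Matrix ((Bool × Fin mfil) × Fin d) ((Bool × Fin mfil) × Fin d) ℝ :=
  Cr' • hessCNN d mfil μ (ξ (Fin.castAdd nf p.1)) (y (Fin.castAdd nf p.1))
        (ℓ (Fin.castAdd nf p.1)) (a (Fin.castAdd nf p.1)) (b (Fin.castAdd nf p.1))
    + Cf' • hessCNN d mfil μ (ξ (Fin.natAdd nr p.2)) (y (Fin.natAdd nr p.2))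
        (ℓ (Fin.natAdd nr p.2)) (a (Fin.natAdd nr p.2)) (b (Fin.natAdd nr p.2))

/-- Mix-coherence matrix of the CNN model. -/
def SmatCNN (d mfil nr nf : ℕ) (μ : Fin d → ℝ) (ξ : Fin (nr + nf) → Fin d → ℝ)
    (y ℓ : Fin (nr + nf) → ℝ) (a b : Fin (nr + nf) → Bool → Fin mfil → Bool)
    (Cr' Cf' : ℝ) : Matrix (Fin nr × Fin nf) (Fin nr × Fin nf) ℝ :=
  Matrix.of fun p q =>
    frob (psdSqrt (DrfCNN d mfil nr nf μ ξ y ℓ a b Cr' Cf' p) *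
      psdSqrt (DrfCNN d mfil nr nf μ ξ y ℓ a b Cr' Cf' q))

lemma moment (n B : ℕ) (T : Finset (Fin n)) :
    ∑ x : Fin n → Bool, selProb n B x * ∏ i ∈ T, (if x i then (1:ℝ) else 0)
      = ((B : ℝ)/n) ^ T.card := by
  have h : ∀ x : Fin n → Bool,
      selProb n B x * ∏ i ∈ T, (if x i then (1:ℝ) else 0)
      = ∏ i, ((if x i then (B:ℝ)/n else 1 - (B:ℝ)/n) *
          (if i ∈ T then (if x i then (1:ℝ) else 0) else 1)) := by
    intro x
    rw [Finset.prod_mul_distrib]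
    congr 1
    rw [Finset.prod_ite_mem, Finset.univ_inter]
  simp_rw [h]
  rw [← Fintype.prod_sum (fun (i : Fin n) (b : Bool) =>
    (if b then (B:ℝ)/n else 1 - (B:ℝ)/n) * (if i ∈ T then (if b then (1:ℝ) else 0) else 1))]
  have h2 : ∀ i : Fin n,
      (∑ b : Bool, ((if b then (B:ℝ)/n else 1 - (B:ℝ)/n) *
          (if i ∈ T then (if b then (1:ℝ) else 0) else 1)))
      = if i ∈ T then (B:ℝ)/n else 1 := by
    intro i
    by_cases hi : i ∈ T <;> simp [hi, Fintype.sum_bool] <;> ring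
  simp_rw [h2]
  rw [Finset.prod_ite_mem, Finset.univ_inter, Finset.prod_const]

lemma moment1 (n B : ℕ) (r : Fin n) :
    ∑ x : Fin n → Bool, selProb n B x * (if x r then (1:ℝ) else 0) = (B:ℝ)/n := by
  simpa using moment n B {r}

lemma expandSq {d : ℕ} (A : Matrix (Fin d) (Fin d) ℝ) (c : ℝ) :
    ((1 : Matrix (Fin d) (Fin d) ℝ) - c • A) * (1 - c • A)
      = 1 - c • A - c • A + (c*c) • (A * A) := by
  simp only [sub_mul, mul_sub, one_mul, mul_one, Matrix.smul_mul, Matrix.mul_smul, smul_smul]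
  abel

lemma moment2 (n B : ℕ) (r r' : Fin n) :
    ∑ x : Fin n → Bool, selProb n B x * ((if x r then (1:ℝ) else 0) * (if x r' then (1:ℝ) else 0))
      = if r = r' then (B:ℝ)/n else ((B:ℝ)/n)^2 := by
  by_cases h : r = r'
  · subst h
    have h1 : ∀ x : Fin n → Bool,
        (if x r then (1:ℝ) else 0) * (if x r then (1:ℝ) else 0)
          = (if x r then (1:ℝ) else 0) := by
      intro x; by_cases hx : x r <;> simp [hx]
    simp_rw [h1]
    rw [moment1]; simp
  · have h1 : ∀ x : Fin n → Bool,
        (if x r then (1:ℝ) else 0) * (if x r' then (1:ℝ) else 0)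
          = ∏ i ∈ ({r, r'} : Finset (Fin n)), (if x i then (1:ℝ) else 0) := by
      intro x; rw [Finset.prod_pair h]
    simp_rw [h1]
    rw [moment, Finset.card_pair h]; simp [h]


/-- retain-set part of the one-step second moment.
`E[(I − η(1−α)(1/B) Σ_r x_r H_r^R)ᵀ (I − η(1−α)(1/B) Σ_r x_r H_r^R)]
  = (I − η(1−α)H_R)² + η²(1−α)²(1/n_r)(1/B − 1/n_r) Σ_r (H_r^R)²`. -/
theorem stmt9 (d nr B : ℕ) (hd : 1 ≤ d) (hnr : 1 ≤ nr) (hB : 0 < B) (hBr : B ≤ nr)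
    (η α : ℝ) (hη : 0 < η) (hα : α ∈ Set.Icc (0 : ℝ) 1)
    (HR : Fin nr → Matrix (Fin d) (Fin d) ℝ) (hHR : ∀ r, (HR r).PosSemidef) :
    ∑ x : Fin nr → Bool,
        selProb nr B x •
          (((1 : Matrix (Fin d) (Fin d) ℝ)
              - (η * (1 - α) / B) • ∑ r, if x r then HR r else 0)ᵀ *
            ((1 : Matrix (Fin d) (Fin d) ℝ)
              - (η * (1 - α) / B) • ∑ r, if x r then HR r else 0))
      = ((1 : Matrix (Fin d) (Fin d) ℝ) - (η * (1 - α)) • Hbar HR) ^ 2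
        + (η ^ 2 * (1 - α) ^ 2 * (nr : ℝ)⁻¹ * ((B : ℝ)⁻¹ - (nr : ℝ)⁻¹)) •
            ∑ r, HR r ^ 2 := by
  have hB0 : (B:ℝ) ≠ 0 := Nat.cast_ne_zero.2 hB.ne'
  have hn0 : (nr:ℝ) ≠ 0 := Nat.cast_ne_zero.2 (by omega)
  set c : ℝ := η * (1 - α) / B with hc
  set p : ℝ := (B:ℝ)/nr with hp
  set S : (Fin nr → Bool) → Matrix (Fin d) (Fin d) ℝ :=
    fun x => ∑ r, (if x r then (1:ℝ) else 0) • HR r with hS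
  set M : Matrix (Fin d) (Fin d) ℝ := ∑ r, HR r with hM
  set Q : Matrix (Fin d) (Fin d) ℝ := ∑ r, HR r * HR r with hQ
  have hsym : ∀ r, (HR r)ᵀ = HR r := by
    intro r
    have h := (hHR r).isHermitian
    simpa [Matrix.IsHermitian] using h
  have hite : ∀ (x : Fin nr → Bool) (r : Fin nr),
      (if x r then HR r else 0) = (if x r then (1:ℝ) else 0) • HR r := by
    intro x r; by_cases h : x r <;> simp [h]
  have hSsym : ∀ x, (S x)ᵀ = S x := by
    intro x
    simp [hS, Matrix.transpose_sum, Matrix.transpose_smul, hsym,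
      apply_ite (Matrix.transpose), Matrix.transpose_zero]
  have key : ∀ x : Fin nr → Bool,
      ((1 : Matrix (Fin d) (Fin d) ℝ)
          - c • ∑ r, if x r then HR r else 0)ᵀ *
        ((1 : Matrix (Fin d) (Fin d) ℝ)
          - c • ∑ r, if x r then HR r else 0)
      = 1 - c • S x - c • S x + (c*c) • (S x * S x) := by
    intro x
    have h1 : (∑ r, if x r then HR r else 0) = S x := by
      simp_rw [hS, hite]
    rw [h1, Matrix.transpose_sub, Matrix.transpose_one, Matrix.transpose_smul, hSsym,
      expandSq]
  have step : ∑ x : Fin nr → Bool,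
        selProb nr B x •
          (((1 : Matrix (Fin d) (Fin d) ℝ)
              - c • ∑ r, if x r then HR r else 0)ᵀ *
            ((1 : Matrix (Fin d) (Fin d) ℝ)
              - c • ∑ r, if x r then HR r else 0))
      = ∑ x : Fin nr → Bool,
          selProb nr B x • (1 - c • S x - c • S x + (c*c) • (S x * S x)) :=
    Finset.sum_congr rfl fun x _ => by rw [key x]
  rw [step]
  simp_rw [smul_add, smul_sub]
  rw [Finset.sum_add_distrib, Finset.sum_sub_distrib, Finset.sum_sub_distrib]
  have pull : ∀ (a : ℝ) (f : (Fin nr → Bool) → Matrix (Fin d) (Fin d) ℝ),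
      ∑ x : Fin nr → Bool, selProb nr B x • (a • f x)
        = a • ∑ x : Fin nr → Bool, selProb nr B x • f x := by
    intro a f
    rw [Finset.smul_sum]
    exact Finset.sum_congr rfl fun x _ => by rw [smul_smul, smul_smul, mul_comm]
  have T0 : ∑ x : Fin nr → Bool, selProb nr B x • (1 : Matrix (Fin d) (Fin d) ℝ)
      = (1 : Matrix (Fin d) (Fin d) ℝ) := by
    rw [← Finset.sum_smul]
    have := moment nr B ∅
    simp only [Finset.prod_empty, mul_one, Finset.card_empty, pow_zero] at this
    rw [this, one_smul]
  have T1 : ∑ x : Fin nr → Bool, selProb nr B x • S x = p • M := by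
    simp_rw [hS, Finset.smul_sum, smul_smul]
    rw [Finset.sum_comm, hM, Finset.smul_sum]
    refine Finset.sum_congr rfl fun r _ => ?_
    rw [← Finset.sum_smul, moment1]
  have T2 : ∑ x : Fin nr → Bool, selProb nr B x • (S x * S x)
      = (p*p) • (M * M) + (p - p*p) • Q := by
    have hprod : ∀ x, S x * S x
        = ∑ r, ∑ r', ((if x r then (1:ℝ) else 0) * (if x r' then (1:ℝ) else 0))
            • (HR r * HR r') := by
      intro x
      rw [hS, Finset.sum_mul_sum]
      exact Finset.sum_congr rfl fun r _ => Finset.sum_congr rfl fun r' _ => by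
        rw [Matrix.smul_mul, Matrix.mul_smul, smul_smul]
    simp_rw [hprod, Finset.smul_sum, smul_smul]
    rw [Finset.sum_comm]
    have hswap : ∀ r : Fin nr,
        ∑ x : Fin nr → Bool, ∑ r',
          (selProb nr B x * ((if x r then (1:ℝ) else 0) * (if x r' then (1:ℝ) else 0)))
            • (HR r * HR r')
        = ∑ r', (if r = r' then p else p^2) • (HR r * HR r') := by
      intro r
      rw [Finset.sum_comm]
      refine Finset.sum_congr rfl fun r' _ => ?_
      rw [← Finset.sum_smul, moment2]
    simp_rw [hswap]
    have hsplit : ∀ r r' : Fin nr, (if r = r' then p else p^2)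
        = p*p + (if r = r' then p - p*p else 0) := by
      intro r r'; by_cases h : r = r' <;> simp [h] <;> ring
    simp_rw [hsplit, add_smul, Finset.sum_add_distrib]
    congr 1
    · rw [hM, Finset.sum_mul_sum, Finset.smul_sum]
      exact Finset.sum_congr rfl fun r _ => by rw [Finset.smul_sum]
    · rw [hQ, Finset.smul_sum]
      refine Finset.sum_congr rfl fun r _ => ?_
      have : ∀ r' : Fin nr, (if r = r' then p - p*p else 0) • (HR r * HR r')
          = if r = r' then (p - p*p) • (HR r * HR r') else 0 := by
        intro r'; split <;> simp
      simp_rw [this]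
      rw [Finset.sum_ite_eq]
      simp
  rw [T0, pull c S, pull (c*c) (fun x => S x * S x), T1, T2]
  have hRHS1 : ((1 : Matrix (Fin d) (Fin d) ℝ) - (η * (1 - α)) • Hbar HR) ^ 2
      = 1 - (η * (1 - α) * (nr:ℝ)⁻¹) • M - (η * (1 - α) * (nr:ℝ)⁻¹) • M
        + ((η * (1 - α) * (nr:ℝ)⁻¹) * (η * (1 - α) * (nr:ℝ)⁻¹)) • (M * M) := by
    rw [Hbar, ← hM, smul_smul, pow_two, expandSq]
  have hRHS2 : (∑ r, HR r ^ 2) = Q := by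
    rw [hQ]; exact Finset.sum_congr rfl fun r _ => by rw [pow_two]
  rw [hRHS1, hRHS2]
  have e1 : c • (p • M) = (η * (1 - α) * (nr:ℝ)⁻¹) • M := by
    rw [smul_smul]
    congr 1
    rw [hc, hp]; field_simp
  have e2 : (c*c) • ((p*p) • (M*M) + (p - p*p) • Q)
      = ((η * (1 - α) * (nr:ℝ)⁻¹) * (η * (1 - α) * (nr:ℝ)⁻¹)) • (M * M)
        + (η ^ 2 * (1 - α) ^ 2 * (nr : ℝ)⁻¹ * ((B : ℝ)⁻¹ - (nr : ℝ)⁻¹)) • Q := by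
    rw [smul_add, smul_smul, smul_smul]
    congr 1
    · congr 1
      rw [hc, hp]; field_simp; try ring
    · congr 1
      rw [hc, hp]; field_simp; try ring
  rw [e1, e2]
  abel


end
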